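/- Let T be an n×m×l binary tensor that has a rank-r irreducible (but not necessarily minimal) Boolean CP decomposition into binary factor matrices A (n×r), B (m×r), C (l×r). Then s(A) + s(B) + s(C) ≥ s(T), where s denotes sparsity. -/

import Mathlib

/-- `A`, `B`, `C` form a rank-`r` Boolean CP decomposition of the binary tensor `T`:
`T = ⋁_{s=1}^r a_{:s} ⊠ b_{:s} ⊠ c_{:s}`. -/
def IsBoolCP {n m l r : ℕ} (T : Fin n → Fin m → Fin l → Bool)
    (A : Fin n → Fin r → Bool) (B : Fin m → Fin r → Bool) (C : Fin l → Fin r → Bool) :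
    Prop :=
  ∀ i j k, T i j k = decide (∃ s : Fin r, (A i s && B j s && C k s) = true)

/-- A rank-`r` Boolean CP decomposition is reducible if some rank-1 component can be
dropped without changing the represented tensor. -/
def BoolCPReducible {n m l r : ℕ}
    (A : Fin n → Fin r → Bool) (B : Fin m → Fin r → Bool) (C : Fin l → Fin r → Bool) :
    Prop :=
  ∃ t : Fin r, ∀ i j k,
    decide (∃ s : Fin r, (A i s && B j s && C k s) = true)
      = decide (∃ s ∈ Finset.univ.erase t, (A i s && B j s && C k s) = true)

/-- Auxiliary arithmetic core: the non-degenerate case. -/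
theorem sparsity_boolCP_aux (n m l r : ℕ) (Tc TA TB TC : ℕ) (xs ys zs : Fin r → ℕ)
    (hAsum : TA = ∑ s, xs s) (hBsum : TB = ∑ s, ys s) (hCsum : TC = ∑ s, zs s)
    (key : ∀ s : Fin r, xs s * ys s * zs s ≤ Tc)
    (hxle : ∀ s, xs s ≤ n) (hyle : ∀ s, ys s ≤ m) (hzle : ∀ s, zs s ≤ l)
    (hn : 0 < n) (hm : 0 < m) (hl : 0 < l) (hr : 0 < r) :
    (1 - (TA : ℝ) / (n * r)) + (1 - (TB : ℝ) / (m * r)) + (1 - (TC : ℝ) / (l * r))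
    ≥ 1 - (Tc : ℝ) / (n * m * l) := by
  have hn' : (0:ℝ) < n := by exact_mod_cast hn
  have hm' : (0:ℝ) < m := by exact_mod_cast hm
  have hl' : (0:ℝ) < l := by exact_mod_cast hl
  have hr' : (0:ℝ) < r := by exact_mod_cast hr
  have main : ∀ s : Fin r, (xs s : ℝ)/n + (ys s : ℝ)/m + (zs s : ℝ)/l
      ≤ 2 + (Tc : ℝ)/(n*m*l) := by
    intro s
    set X : ℝ := (xs s : ℝ)/n with hX
    set Y : ℝ := (ys s : ℝ)/m with hY
    set Z : ℝ := (zs s : ℝ)/l with hZ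
    have hX0 : 0 ≤ X := by positivity
    have hY0 : 0 ≤ Y := by positivity
    have hZ0 : 0 ≤ Z := by positivity
    have hX1 : X ≤ 1 := by
      rw [hX]; apply div_le_one_of_le₀ _ hn'.le; exact_mod_cast hxle s
    have hY1 : Y ≤ 1 := by
      rw [hY]; apply div_le_one_of_le₀ _ hm'.le; exact_mod_cast hyle s
    have hZ1 : Z ≤ 1 := by
      rw [hZ]; apply div_le_one_of_le₀ _ hl'.le; exact_mod_cast hzle s
    have hXY : X * Y ≤ 1 := mul_le_one₀ hX1 hY0 hY1
    have hprod : X * Y * Z ≤ (Tc : ℝ)/(n*m*l) := by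
      have e : X * Y * Z = ((xs s : ℝ) * (ys s : ℝ) * (zs s : ℝ)) / (↑n*↑m*↑l) := by
        rw [hX, hY, hZ, div_mul_div_comm, div_mul_div_comm]
      rw [e]
      gcongr
      exact_mod_cast key s
    nlinarith [mul_nonneg (sub_nonneg.2 hX1) (sub_nonneg.2 hY1),
      mul_nonneg (sub_nonneg.2 hZ1) (sub_nonneg.2 hXY)]
  have hsum : ∑ s : Fin r, ((xs s : ℝ)/n + (ys s : ℝ)/m + (zs s : ℝ)/l)
      ≤ r * (2 + (Tc : ℝ)/(n*m*l)) := by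
    calc ∑ s : Fin r, ((xs s : ℝ)/n + (ys s : ℝ)/m + (zs s : ℝ)/l)
        ≤ ∑ _s : Fin r, (2 + (Tc : ℝ)/(n*m*l)) :=
          Finset.sum_le_sum fun s _ => main s
      _ = r * (2 + (Tc : ℝ)/(n*m*l)) := by
          rw [Finset.sum_const, Finset.card_univ, Fintype.card_fin, nsmul_eq_mul]
  have hsplit : ∑ s : Fin r, ((xs s : ℝ)/n + (ys s : ℝ)/m + (zs s : ℝ)/l)
      = (TA : ℝ)/n + (TB : ℝ)/m + (TC : ℝ)/l := by
    rw [Finset.sum_add_distrib, Finset.sum_add_distrib, ← Finset.sum_div, ← Finset.sum_div,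
      ← Finset.sum_div]
    rw [hAsum, hBsum, hCsum]
    push_cast
    ring
  rw [hsplit] at hsum
  have hfin : (TA : ℝ)/(↑n*↑r) + (TB : ℝ)/(↑m*↑r) + (TC : ℝ)/(↑l*↑r)
      ≤ 2 + (Tc : ℝ)/(↑n*↑m*↑l) := by
    rw [show (TA : ℝ)/(↑n*↑r) = ((TA:ℝ)/↑n)/↑r from by rw [div_div],
      show (TB : ℝ)/(↑m*↑r) = ((TB:ℝ)/↑m)/↑r from by rw [div_div],
      show (TC : ℝ)/(↑l*↑r) = ((TC:ℝ)/↑l)/↑r from by rw [div_div],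
      ← add_div, ← add_div, div_le_iff₀ hr']
    nlinarith [hsum]
  linarith

set_option maxHeartbeats 1000000 in
/-- If a binary tensor `T` has a rank-`r` irreducible (not necessarily
minimal) Boolean CP decomposition into `A`, `B`, `C`, then
`s(A) + s(B) + s(C) ≥ s(T)` where `s` denotes sparsity. -/
theorem sparsity_boolCP_factors (n m l r : ℕ) (T : Fin n → Fin m → Fin l → Bool)
    (A : Fin n → Fin r → Bool) (B : Fin m → Fin r → Bool) (C : Fin l → Fin r → Bool)
    (hCP : IsBoolCP T A B C) (hirr : ¬ BoolCPReducible A B C) :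
    (1 - ((Finset.univ.filter fun x : Fin n × Fin r => A x.1 x.2 = true).card : ℝ) / (n * r))
      + (1 - ((Finset.univ.filter fun x : Fin m × Fin r => B x.1 x.2 = true).card : ℝ) / (m * r))
      + (1 - ((Finset.univ.filter fun x : Fin l × Fin r => C x.1 x.2 = true).card : ℝ) / (l * r))
    ≥ 1 - ((Finset.univ.filter fun x : Fin n × Fin m × Fin l =>
        T x.1 x.2.1 x.2.2 = true).card : ℝ) / (n * m * l) := by
  classical
  set TA := (Finset.univ.filter fun x : Fin n × Fin r => A x.1 x.2 = true).card with hTA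
  set TB := (Finset.univ.filter fun x : Fin m × Fin r => B x.1 x.2 = true).card with hTB
  set TC := (Finset.univ.filter fun x : Fin l × Fin r => C x.1 x.2 = true).card with hTC
  set Tc := (Finset.univ.filter fun x : Fin n × Fin m × Fin l =>
    T x.1 x.2.1 x.2.2 = true).card with hTcdef
  set xs : Fin r → ℕ := fun s => (Finset.univ.filter fun i => A i s = true).card with hxs
  set ys : Fin r → ℕ := fun s => (Finset.univ.filter fun j => B j s = true).card with hys
  set zs : Fin r → ℕ := fun s => (Finset.univ.filter fun k => C k s = true).card with hzs
  have hAsum : TA = ∑ s, xs s := by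
    rw [hTA, Finset.card_filter, Fintype.sum_prod_type, Finset.sum_comm]
    simp only [hxs, Finset.card_filter]
  have hBsum : TB = ∑ s, ys s := by
    rw [hTB, Finset.card_filter, Fintype.sum_prod_type, Finset.sum_comm]
    simp only [hys, Finset.card_filter]
  have hCsum : TC = ∑ s, zs s := by
    rw [hTC, Finset.card_filter, Fintype.sum_prod_type, Finset.sum_comm]
    simp only [hzs, Finset.card_filter]
  have key : ∀ s : Fin r, xs s * ys s * zs s ≤ Tc := by
    intro s
    have hsub : ((Finset.univ.filter fun i => A i s = true) ×ˢ
        ((Finset.univ.filter fun j => B j s = true) ×ˢ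
          (Finset.univ.filter fun k => C k s = true)))
        ⊆ Finset.univ.filter fun x : Fin n × Fin m × Fin l => T x.1 x.2.1 x.2.2 = true := by
      intro x hx
      simp only [Finset.mem_product, Finset.mem_filter, Finset.mem_univ, true_and] at hx
      simp only [Finset.mem_filter, Finset.mem_univ, true_and]
      rw [hCP]
      simp only [decide_eq_true_eq]
      exact ⟨s, by simp [hx.1, hx.2.1, hx.2.2]⟩
    have := Finset.card_le_card hsub
    simpa [Finset.card_product, hxs, hys, hzs, mul_assoc] using this
  have hxle : ∀ s, xs s ≤ n := fun s => by
    simpa [hxs] using Finset.card_filter_le Finset.univ (fun i : Fin n => A i s = true)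
  have hyle : ∀ s, ys s ≤ m := fun s => by
    simpa [hys] using Finset.card_filter_le Finset.univ (fun j : Fin m => B j s = true)
  have hzle : ∀ s, zs s ≤ l := fun s => by
    simpa [hzs] using Finset.card_filter_le Finset.univ (fun k : Fin l => C k s = true)
  -- division bounds for degenerate cases
  have hTB1 : (TB : ℝ) / (↑m * ↑r) ≤ 1 := by
    apply div_le_one_of_le₀ _ (by positivity)
    have : TB ≤ m * r := by
      simpa [Finset.card_univ] using
        Finset.card_filter_le Finset.univ (fun x : Fin m × Fin r => B x.1 x.2 = true)
    exact_mod_cast this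
  have hTC1 : (TC : ℝ) / (↑l * ↑r) ≤ 1 := by
    apply div_le_one_of_le₀ _ (by positivity)
    have : TC ≤ l * r := by
      simpa [Finset.card_univ] using
        Finset.card_filter_le Finset.univ (fun x : Fin l × Fin r => C x.1 x.2 = true)
    exact_mod_cast this
  have hTA1 : (TA : ℝ) / (↑n * ↑r) ≤ 1 := by
    apply div_le_one_of_le₀ _ (by positivity)
    have : TA ≤ n * r := by
      simpa [Finset.card_univ] using
        Finset.card_filter_le Finset.univ (fun x : Fin n × Fin r => A x.1 x.2 = true)
    exact_mod_cast this
  rcases Nat.eq_zero_or_pos r with hr | hr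
  · subst hr
    have h1 : TA = 0 := by rw [hTA]; simp [Finset.filter_eq_empty_iff]
    have h2 : TB = 0 := by rw [hTB]; simp [Finset.filter_eq_empty_iff]
    have h3 : TC = 0 := by rw [hTC]; simp [Finset.filter_eq_empty_iff]
    have h4 : (0:ℝ) ≤ (Tc : ℝ) / (↑n*↑m*↑l) := by positivity
    rw [h1, h2, h3]; push_cast; rw [mul_zero, mul_zero, mul_zero, div_zero]; linarith
  rcases Nat.eq_zero_or_pos n with hn | hn
  · subst hn
    have h1 : TA = 0 := by rw [hTA]; simp
    have h2 : Tc = 0 := by rw [hTcdef]; simp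
    have h0 : (0:ℝ) ≤ (TB : ℝ) / (↑m*↑r) := by positivity
    have h0' : (0:ℝ) ≤ (TC : ℝ) / (↑l*↑r) := by positivity
    rw [h1, h2]; push_cast; rw [zero_div, zero_div]; linarith
  rcases Nat.eq_zero_or_pos m with hm | hm
  · subst hm
    have h1 : TB = 0 := by rw [hTB]; simp
    have h2 : Tc = 0 := by rw [hTcdef]; simp
    have h0 : (0:ℝ) ≤ (TA : ℝ) / (↑n*↑r) := by positivity
    have h0' : (0:ℝ) ≤ (TC : ℝ) / (↑l*↑r) := by positivity
    rw [h1, h2]; push_cast; rw [zero_div, zero_div]; linarith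
  rcases Nat.eq_zero_or_pos l with hl | hl
  · subst hl
    have h1 : TC = 0 := by rw [hTC]; simp
    have h2 : Tc = 0 := by rw [hTcdef]; simp
    have h0 : (0:ℝ) ≤ (TA : ℝ) / (↑n*↑r) := by positivity
    have h0' : (0:ℝ) ≤ (TB : ℝ) / (↑m*↑r) := by positivity
    rw [h1, h2]; push_cast; rw [zero_div, zero_div]; linarith
  exact sparsity_boolCP_aux n m l r Tc TA TB TC xs ys zs hAsum hBsum hCsum key
    hxle hyle hzle hn hm hl hr
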